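/- Lemma (comparison with the frozen-dual auxiliary sequence). Let ℓ, D_Y, r_y > 0, consider the hard OS instance, and run Perturbed Smoothed GDA on it with parameters r_x > ℓ, β ∈ (0,1), α > 0 and 0 < c < 1/(r_x + ℓ), initialized at (x_0, y_0, z_0) with 0 < x_0 < 1, 0 < z_0 < 1 and y_0 = D_Y. Define the auxiliary sequence by (x_0', y_0', z_0') := (x_0, y_0, z_0) and, for all t ≥ 0, x_{t+1}' := (1 − c·r_x − ℓ·c·D_Y/(D_Y+1))·x_t' + c·r_x·z_t', y_{t+1}' := D_Y, z_{t+1}' := β·(1 − ℓ·c·D_Y/(D_Y+1) − c·r_x)·x_t' + (1 − β + β·c·r_x)·z_t'. Then for every t ∈ ℕ: (i) 0 < x_t' ≤ x_t ≤ 1; (ii) 0 ≤ y_t ≤ y_t' = D_Y; (iii) 0 < z_t' ≤ z_t ≤ 1. -/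
import Mathlib


noncomputable section

/-- The function `h` of the hard OS instance. -/
def hOS (l Dy : ℝ) (x : ℝ) : ℝ :=
  if |x| ≤ 1 then l / (2 * (Dy + 1)) * x ^ 2
  else if |x| < 2 then l / (Dy + 1) - l / (2 * (Dy + 1)) * (|x| - 2) ^ 2
  else l / (Dy + 1)

/-- The derivative of `hOS` in `x`. -/
def hOS' (l Dy : ℝ) (x : ℝ) : ℝ :=
  if |x| ≤ 1 then l / (Dy + 1) * x
  else if |x| < 2 then -(l / (Dy + 1)) * (|x| - 2) * Real.sign x
  else 0

/-- Metric projection of `v` onto the interval `[0, Dy]`. -/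
def projI (Dy v : ℝ) : ℝ := max 0 (min Dy v)

/-- Value function `Φ(z) = max_{y ∈ [0, Dy]} h(z)·y` of the hard OS instance. -/
def PhiOS (l Dy : ℝ) (z : ℝ) : ℝ :=
  sSup ((fun y => hOS l Dy z * y) '' Set.Icc (0 : ℝ) Dy)

/-- `x` is an `ε`-optimization-stationary point of the hard OS instance:
the minimizer `p` of `Φ(z) + ℓ(z − x)²` over `z ∈ ℝ` satisfies `|p − x| ≤ ε/(2ℓ)`. -/
def IsOS1 (l Dy ε x : ℝ) : Prop :=
  ∃ p : ℝ, (∀ z : ℝ, PhiOS l Dy p + l * (p - x) ^ 2 ≤ PhiOS l Dy z + l * (z - x) ^ 2) ∧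
    |p - x| ≤ ε / (2 * l)

/-- Comparison of Perturbed Smoothed GDA on the hard OS instance with the
frozen-dual auxiliary sequence. -/
theorem psgda_frozen_dual_comparison
    (l Dy ry rx α β c : ℝ) (xs ys zs xs' ys' zs' : ℕ → ℝ)
    (hl : 0 < l) (hDy : 0 < Dy) (hry : 0 < ry)
    (hrx : l < rx) (hβ : 0 < β) (hβ1 : β < 1) (hα : 0 < α)
    (hc : 0 < c) (hc1 : c < 1 / (rx + l))
    -- initialization
    (hx0 : 0 < xs 0 ∧ xs 0 < 1) (hz0 : 0 < zs 0 ∧ zs 0 < 1) (hy0 : ys 0 = Dy)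
    -- Perturbed Smoothed GDA iterations on F̃(x,y,z) = h(x)·y + (r_x/2)(x−z)² − (r_y/2)y²
    (hxrec : ∀ t, xs (t + 1) = xs t - c * (hOS' l Dy (xs t) * ys t + rx * (xs t - zs t)))
    (hyrec : ∀ t, ys (t + 1) = projI Dy (ys t + α * (hOS l Dy (xs (t + 1)) - ry * ys t)))
    (hzrec : ∀ t, zs (t + 1) = zs t + β * (xs (t + 1) - zs t))
    -- the frozen-dual auxiliary sequence
    (hx0' : xs' 0 = xs 0) (hy0' : ys' 0 = ys 0) (hz0' : zs' 0 = zs 0)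
    (hxrec' : ∀ t, xs' (t + 1) =
      (1 - c * rx - l * c * Dy / (Dy + 1)) * xs' t + c * rx * zs' t)
    (hyrec' : ∀ t, ys' (t + 1) = Dy)
    (hzrec' : ∀ t, zs' (t + 1) =
      β * (1 - l * c * Dy / (Dy + 1) - c * rx) * xs' t + (1 - β + β * c * rx) * zs' t) :
    ∀ t : ℕ,
      (0 < xs' t ∧ xs' t ≤ xs t ∧ xs t ≤ 1) ∧
      (0 ≤ ys t ∧ ys t ≤ ys' t ∧ ys' t = Dy) ∧
      (0 < zs' t ∧ zs' t ≤ zs t ∧ zs t ≤ 1) := by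
  -- preliminary facts
  have hDy1 : (0:ℝ) < Dy + 1 := by linarith
  have hcl : c * (rx + l) < 1 := by
    have := (lt_div_iff₀ (by linarith : (0:ℝ) < rx + l)).mp hc1
    linarith
  have hA : 0 < 1 - c * rx - l * c * Dy / (Dy + 1) := by
    have h1 : l * c * Dy / (Dy + 1) ≤ l * c := by
      rw [div_le_iff₀ hDy1]; nlinarith
    nlinarith
  have hcrx : c * rx < 1 := by nlinarith
  intro t
  induction t with
  | zero =>
    refine ⟨⟨?_, ?_, ?_⟩, ⟨?_, ?_, ?_⟩, ⟨?_, ?_, ?_⟩⟩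
    · rw [hx0']; exact hx0.1
    · rw [hx0']
    · exact hx0.2.le
    · rw [hy0]; exact hDy.le
    · rw [hy0']
    · rw [hy0', hy0]
    · rw [hz0']; exact hz0.1
    · rw [hz0']
    · exact hz0.2.le
  | succ t ih =>
    obtain ⟨⟨hx'pos, hx'le, hxle⟩, ⟨hynn, hyle', hy'eq⟩, ⟨hz'pos, hz'le, hzle⟩⟩ := ih
    have hxpos : 0 < xs t := lt_of_lt_of_le hx'pos hx'le
    have hzpos : 0 < zs t := lt_of_lt_of_le hz'pos hz'le
    have hyDy : ys t ≤ Dy := hy'eq ▸ hyle'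
    have habs : |xs t| ≤ 1 := abs_le.mpr ⟨by linarith, hxle⟩
    have hd : hOS' l Dy (xs t) = l / (Dy + 1) * xs t := by
      rw [hOS', if_pos habs]
    have hx1 : xs (t + 1) = (1 - c * rx - c * l * ys t / (Dy + 1)) * xs t + c * rx * zs t := by
      rw [hxrec t, hd]; field_simp; ring
    have hAle : 1 - c * rx - l * c * Dy / (Dy + 1) ≤ 1 - c * rx - c * l * ys t / (Dy + 1) := by
      have h2 : c * l * ys t / (Dy + 1) ≤ l * c * Dy / (Dy + 1) := by
        rw [div_le_div_iff₀ hDy1 hDy1]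
        nlinarith [mul_nonneg (mul_nonneg (mul_nonneg hc.le hl.le) (sub_nonneg.mpr hyDy)) hDy1.le]
      linarith
    -- x facts
    have hx'pos1 : 0 < xs' (t + 1) := by
      rw [hxrec' t]
      have := mul_pos hA hx'pos
      have := mul_pos (mul_pos hc (by linarith : (0:ℝ) < rx)) hz'pos
      linarith
    have hx'le1 : xs' (t + 1) ≤ xs (t + 1) := by
      rw [hxrec' t, hx1]
      have h1 : (1 - c * rx - l * c * Dy / (Dy + 1)) * xs' t
          ≤ (1 - c * rx - l * c * Dy / (Dy + 1)) * xs t :=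
        mul_le_mul_of_nonneg_left hx'le hA.le
      have h2 : (1 - c * rx - l * c * Dy / (Dy + 1)) * xs t
          ≤ (1 - c * rx - c * l * ys t / (Dy + 1)) * xs t :=
        mul_le_mul_of_nonneg_right hAle hxpos.le
      have h3 : c * rx * zs' t ≤ c * rx * zs t :=
        mul_le_mul_of_nonneg_left hz'le (mul_nonneg hc.le (by linarith : (0:ℝ) ≤ rx))
      linarith
    have hxle1 : xs (t + 1) ≤ 1 := by
      rw [hx1]
      have h0 : 0 ≤ c * l * ys t / (Dy + 1) := div_nonneg (mul_nonneg (mul_nonneg hc.le hl.le) hynn) hDy1.le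
      have h2 : (1 - c * rx - c * l * ys t / (Dy + 1)) * xs t ≤ (1 - c * rx) * xs t :=
        mul_le_mul_of_nonneg_right (by linarith) hxpos.le
      have h3 : (1 - c * rx) * xs t ≤ (1 - c * rx) * 1 :=
        mul_le_mul_of_nonneg_left hxle (by linarith)
      have h4 : c * rx * zs t ≤ c * rx * 1 :=
        mul_le_mul_of_nonneg_left hzle (mul_nonneg hc.le (by linarith : (0:ℝ) ≤ rx))
      linarith
    -- z facts
    have hz1 : zs (t + 1) = (1 - β) * zs t + β * xs (t + 1) := by rw [hzrec t]; ring
    have hz1' : zs' (t + 1) = (1 - β) * zs' t + β * xs' (t + 1) := by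
      rw [hzrec' t, hxrec' t]; ring
    refine ⟨⟨hx'pos1, hx'le1, hxle1⟩, ⟨?_, ?_, ?_⟩, ⟨?_, ?_, ?_⟩⟩
    · rw [hyrec t]; exact le_max_left _ _
    · rw [hyrec t, hyrec' t, projI]
      exact max_le hDy.le (min_le_left _ _)
    · exact hyrec' t
    · rw [hz1']
      have := mul_pos (by linarith : (0:ℝ) < 1 - β) hz'pos
      have := mul_pos hβ hx'pos1
      linarith
    · rw [hz1, hz1']
      have h1 : (1 - β) * zs' t ≤ (1 - β) * zs t :=
        mul_le_mul_of_nonneg_left hz'le (by linarith)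
      have h2 : β * xs' (t + 1) ≤ β * xs (t + 1) :=
        mul_le_mul_of_nonneg_left hx'le1 hβ.le
      linarith
    · rw [hz1]
      have h1 : (1 - β) * zs t ≤ (1 - β) * 1 := mul_le_mul_of_nonneg_left hzle (by linarith)
      have h2 : β * xs (t + 1) ≤ β * 1 := mul_le_mul_of_nonneg_left hxle1 hβ.le
      linarith
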